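/- Let β ∈ (0,1), ν ≥ 0, w ∈ ℝ, m a nonnegative integer and t > 0. Then ∫₀^t e^{−νy} y^m M_{β, m+1}(w y^β) dy = e^{−νt} Σ_{n=0}^∞ ν^n t^{m+n+1} M_{β, m+n+2}(w t^β), where M_{a,b}(z) = Σ_{n=0}^∞ z^n / Γ(an + b) is the two-parameter Mittag-Leffler function. -/

import Mathlib

open MeasureTheory Real Filter

/-- The two-parameter Mittag-Leffler function `M_{a,b}(z) = ∑ zⁿ / Γ(an + b)`. -/
noncomputable def mittagLeffler (a b z : ℝ) : ℝ :=
  ∑' n : ℕ, z ^ n / Real.Gamma (a * n + b)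

open Finset
open scoped ENNReal NNReal

lemma gamma_ge (x : ℝ) (hx : 1 ≤ x) : (1/6 : ℝ) ≤ Real.Gamma x := by
  have hmono := Real.Gamma_strictMonoOn_Ici.monotoneOn
  rcases le_or_gt 2 x with h | h
  · have := hmono (by norm_num : (2:ℝ) ∈ Set.Ici 2) (Set.mem_Ici.2 h) h
    rw [Real.Gamma_two] at this; linarith
  · have h1 : Real.Gamma (x + 2) = (x+1) * (x * Real.Gamma x) := by
      have e1 : Real.Gamma (x + 1) = x * Real.Gamma x := Real.Gamma_add_one (by linarith)
      have e2 : Real.Gamma ((x+1) + 1) = (x+1) * Real.Gamma (x+1) :=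
        Real.Gamma_add_one (by linarith)
      rw [show x + 2 = (x+1)+1 by ring, e2, e1]
    have h2 : (1:ℝ) ≤ Real.Gamma (x+2) := by
      have := hmono (by norm_num : (2:ℝ) ∈ Set.Ici 2)
        (Set.mem_Ici.2 (show (2:ℝ) ≤ x + 2 by linarith)) (show (2:ℝ) ≤ x + 2 by linarith)
      rw [Real.Gamma_two] at this; linarith
    have hp := Real.Gamma_pos_of_pos (show (0:ℝ) < x by linarith)
    have h6 : 0 ≤ (6 - (x+1)*x) * Real.Gamma x := mul_nonneg (by nlinarith) hp.le
    nlinarith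

lemma gamma_fact_le (x : ℝ) (hx : 1 ≤ x) :
    ∀ n : ℕ, (n.factorial : ℝ) * Real.Gamma x ≤ Real.Gamma (x + n) := by
  intro n
  induction n with
  | zero => simp
  | succ n ih =>
    have hpos : 0 < Real.Gamma (x + n) := Real.Gamma_pos_of_pos (by positivity)
    have h1 : Real.Gamma (x + (n+1:ℕ)) = (x + n) * Real.Gamma (x + n) := by
      push_cast
      rw [show x + ((n:ℝ)+1) = (x + n) + 1 by ring]
      exact Real.Gamma_add_one (by positivity)
    have h2 : ((n:ℝ)+1) * ((n.factorial : ℝ) * Real.Gamma x) ≤ (x + n) * Real.Gamma (x + n) := by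
      apply mul_le_mul (by linarith) ih (by positivity) (by positivity)
    rw [h1]
    push_cast [Nat.factorial_succ]
    nlinarith

lemma gamma_floor_le (y b : ℝ) (hy : 0 ≤ y) (hb : 1 ≤ b) :
    (1/6 : ℝ) * ((Nat.floor y).factorial : ℝ) ≤ Real.Gamma (y + b) := by
  have hmono := Real.Gamma_strictMonoOn_Ici.monotoneOn
  rcases Nat.eq_zero_or_pos (Nat.floor y) with h | h
  · rw [h]; simpa using gamma_ge (y+b) (by linarith)
  · have hfl : (Nat.floor y : ℝ) ≤ y := Nat.floor_le hy
    have h2 : (2:ℝ) ≤ (Nat.floor y : ℝ) + 1 := by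
      have : (1:ℝ) ≤ (Nat.floor y : ℝ) := by exact_mod_cast h
      linarith
    have h3 : Real.Gamma ((Nat.floor y : ℝ) + 1) ≤ Real.Gamma (y + b) := by
      apply hmono (Set.mem_Ici.2 h2) (Set.mem_Ici.2 (by linarith)) (by linarith)
    rw [Real.Gamma_nat_eq_factorial] at h3
    have : (0:ℝ) < ((Nat.floor y).factorial : ℝ) := by positivity
    nlinarith

lemma summable_aux (a b z : ℝ) (ha : 0 < a) (hb : 1 ≤ b) (hz : 0 ≤ z) :
    Summable (fun k : ℕ => z ^ k / Real.Gamma (a * k + b)) := by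
  set x := (z+1) ^ (1/a) with hxdef
  have hx1 : (1:ℝ) ≤ x := Real.one_le_rpow (by linarith) (by positivity)
  set r := x / (x+1) with hrdef
  have hr0 : 0 < r := by positivity
  have hr1 : r < 1 := by rw [hrdef, div_lt_one (by linarith)]; linarith
  have hrx : r * (x + 1) = x := by rw [hrdef]; field_simp
  have key : ∀ k : ℕ, z ^ k / Real.Gamma (a*k+b) ≤
      (6 * x * Real.exp (x+1) / r) * (r ^ (a:ℝ)) ^ k := by
    intro k
    set j := Nat.floor (a*(k:ℝ)) with hj
    have hak : (0:ℝ) ≤ a*k := by positivity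
    have hG : (1/6 : ℝ) * (j.factorial:ℝ) ≤ Real.Gamma (a*k+b) := gamma_floor_le _ b hak hb
    have hfj : (0:ℝ) < (j.factorial:ℝ) := by positivity
    have hz1 : z^k ≤ x ^ (a*(k:ℝ)) := by
      have hxk : x ^ (a*(k:ℝ)) = (z+1)^k := by
        rw [hxdef, ← Real.rpow_natCast (z+1) k, ← Real.rpow_mul (by linarith)]
        congr 1; field_simp
      rw [hxk]; exact pow_le_pow_left₀ hz (by linarith) k
    have hxj : x ^ (a*(k:ℝ)) ≤ x * x^j := by
      have h1 : x ^ (a*(k:ℝ)) ≤ x ^ ((j:ℝ)+1) :=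
        Real.rpow_le_rpow_of_exponent_le hx1 (le_of_lt (Nat.lt_floor_add_one _))
      have h2 : x ^ ((j:ℝ)+1) = x * x^j := by
        rw [show ((j:ℝ)+1) = ((j+1:ℕ):ℝ) by push_cast; ring, Real.rpow_natCast, pow_succ]
        ring
      linarith
    have hxe : (x:ℝ)^j / j.factorial ≤ Real.exp (x+1) * r^j := by
      have h3 : (x:ℝ)^j / j.factorial = r^j * ((x+1)^j / j.factorial) := by
        rw [div_eq_iff (ne_of_gt hfj)]
        field_simp
        rw [← mul_pow, hrx]
      rw [h3]
      calc r^j * ((x+1)^j / j.factorial) ≤ r^j * Real.exp (x+1) := by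
            apply mul_le_mul_of_nonneg_left
              (Real.pow_div_factorial_le_exp (x+1) (by linarith) j) (pow_nonneg hr0.le j)
        _ = Real.exp (x+1) * r^j := by ring
    have hrj : r^j ≤ (1/r) * (r ^ (a:ℝ))^k := by
      have h4 : (r:ℝ)^j = r ^ ((j:ℝ)) := (Real.rpow_natCast r j).symm
      have h5 : r ^ ((j:ℝ)) ≤ r ^ (a*(k:ℝ) - 1) := by
        apply Real.rpow_le_rpow_of_exponent_ge hr0 hr1.le
        have := Nat.lt_floor_add_one (a*(k:ℝ))
        rw [← hj] at this; linarith
      have h6 : r ^ (a*(k:ℝ) - 1) = (1/r) * (r ^ (a:ℝ))^k := by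
        rw [Real.rpow_sub hr0, Real.rpow_one, ← Real.rpow_natCast (r ^ (a:ℝ)) k,
          ← Real.rpow_mul hr0.le]
        ring
      rw [h4]; rw [h6] at h5; exact h5
    have hxak : (0:ℝ) ≤ x ^ (a*(k:ℝ)) := Real.rpow_nonneg (by linarith) _
    calc z ^ k / Real.Gamma (a*k+b) ≤ x ^ (a*(k:ℝ)) / ((1/6 : ℝ) * (j.factorial:ℝ)) :=
          div_le_div₀ hxak hz1 (by positivity) hG
      _ = 6 * (x ^ (a*(k:ℝ)) / j.factorial) := by ring
      _ ≤ 6 * ((x * x^j) / j.factorial) := by gcongr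
      _ = 6 * x * ((x:ℝ)^j / j.factorial) := by ring
      _ ≤ 6 * x * (Real.exp (x+1) * r^j) := by
          apply mul_le_mul_of_nonneg_left hxe (by positivity)
      _ ≤ 6 * x * (Real.exp (x+1) * ((1/r) * (r ^ (a:ℝ))^k)) := by
          have : (0:ℝ) < Real.exp (x+1) := Real.exp_pos _
          apply mul_le_mul_of_nonneg_left _ (by positivity)
          exact mul_le_mul_of_nonneg_left hrj this.le
      _ = (6 * x * Real.exp (x+1) / r) * (r ^ (a:ℝ)) ^ k := by ring
  apply Summable.of_nonneg_of_le (fun k => by positivity) key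
  apply Summable.mul_left
  exact summable_geometric_of_lt_one (Real.rpow_nonneg hr0.le a)
    (Real.rpow_lt_one hr0.le hr1 ha)

noncomputable def Pprod (s : ℝ) (n : ℕ) : ℝ := ∏ i ∈ Finset.range n, (s + i + 1)

lemma Pprod_pos {s : ℝ} (hs : 0 ≤ s) (n : ℕ) : 0 < Pprod s n :=
  Finset.prod_pos fun i _ => by positivity

lemma Pprod_succ (s : ℝ) (n : ℕ) : Pprod s (n+1) = Pprod s n * (s + n + 1) :=
  Finset.prod_range_succ _ n

lemma Pprod_ge_fact {s : ℝ} (hs : 0 ≤ s) (n : ℕ) : (n.factorial : ℝ) ≤ Pprod s n := by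
  induction n with
  | zero => simp [Pprod]
  | succ n ih =>
    rw [Pprod_succ]
    have h1 : (0:ℝ) < Pprod s n := Pprod_pos hs n
    have h2 : ((n:ℝ)+1) ≤ s + n + 1 := by linarith
    have hf : (0:ℝ) < (n.factorial:ℝ) := by positivity
    push_cast [Nat.factorial_succ]
    nlinarith

lemma Pprod_gamma {s : ℝ} (hs : 0 ≤ s) (n : ℕ) :
    Real.Gamma (s+1) * Pprod s n = Real.Gamma (s + n + 1) := by
  induction n with
  | zero => simp [Pprod]
  | succ n ih =>
    rw [Pprod_succ, ← mul_assoc, ih]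
    rw [show s + ((n:ℕ)+1:ℕ) + 1 = (s + n + 1) + 1 by push_cast; ring]
    rw [Real.Gamma_add_one (show s + (n:ℝ) + 1 ≠ 0 by
      have h : (0:ℝ) ≤ (n:ℝ) := n.cast_nonneg; linarith)]
    ring

lemma integrable_aux (ν t c : ℝ) (hc : 0 ≤ c) :
    IntervalIntegrable (fun y => Real.exp (-ν*y) * y ^ c) volume 0 t := by
  apply ContinuousOn.intervalIntegrable
  apply ContinuousOn.mul
  · exact (Real.continuous_exp.comp (continuous_const.mul continuous_id)).continuousOn
  · exact continuousOn_id.rpow_const fun x _ => Or.inr hc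

lemma ibp_step (ν t c : ℝ) (hc : 0 ≤ c) (ht : 0 < t) :
    ∫ y in (0:ℝ)..t, Real.exp (-ν*y) * y ^ c
      = Real.exp (-ν*t) * t^(c+1)/(c+1)
        + (ν/(c+1)) * ∫ y in (0:ℝ)..t, Real.exp (-ν*y) * y^(c+1) := by
  have hc1 : (0:ℝ) < c + 1 := by linarith
  have hu : ∀ y ∈ Set.uIcc (0:ℝ) t, HasDerivAt (fun z => Real.exp (-ν*z))
      (-ν * Real.exp (-ν*y)) y := by
    intro y _
    have h1 : HasDerivAt (fun z : ℝ => -ν*z) (-ν) y := by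
      simpa using (hasDerivAt_id y).const_mul (-ν)
    simpa [mul_comm] using h1.exp
  have hv : ∀ y ∈ Set.uIcc (0:ℝ) t, HasDerivAt (fun z : ℝ => z ^ (c+1) / (c+1))
      (y ^ c) y := by
    intro y _
    have h := (Real.hasDerivAt_rpow_const (x := y) (p := c+1)
      (Or.inr (by linarith))).div_const (c+1)
    refine h.congr_deriv ?_
    rw [show c + 1 - 1 = c by ring]
    field_simp
  have hu' : IntervalIntegrable (fun y => -ν * Real.exp (-ν*y)) volume 0 t := by
    apply ContinuousOn.intervalIntegrable
    exact (continuous_const.mul (Real.continuous_exp.comp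
      (continuous_const.mul continuous_id))).continuousOn
  have hv' : IntervalIntegrable (fun y : ℝ => y ^ c) volume 0 t :=
    ContinuousOn.intervalIntegrable (continuousOn_id.rpow_const fun x _ => Or.inr hc)
  have key := intervalIntegral.integral_mul_deriv_eq_deriv_mul hu hv hu' hv'
  rw [key]
  have h0 : (0:ℝ) ^ (c+1) = 0 := Real.zero_rpow (by positivity)
  have hcongr : ∫ y in (0:ℝ)..t, -ν * Real.exp (-ν*y) * (y^(c+1)/(c+1))
      = (-ν/(c+1)) * ∫ y in (0:ℝ)..t, Real.exp (-ν*y) * y^(c+1) := by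
    rw [← intervalIntegral.integral_const_mul]
    apply intervalIntegral.integral_congr
    intro y _
    ring
  rw [hcongr, h0]
  ring

lemma integral_nonneg_aux (ν t c : ℝ) (hν : 0 ≤ ν) (ht : 0 < t) (hc : 0 ≤ c) :
    0 ≤ ∫ y in (0:ℝ)..t, Real.exp (-ν*y) * y ^ c := by
  apply intervalIntegral.integral_nonneg ht.le
  intro y hy
  have := Real.rpow_nonneg hy.1 c
  positivity

lemma integral_le_aux (ν t c : ℝ) (hν : 0 ≤ ν) (ht : 0 < t) (hc : 0 ≤ c) :
    (∫ y in (0:ℝ)..t, Real.exp (-ν*y) * y ^ c) ≤ t^(c+1)/(c+1) := by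
  have h1 : (∫ y in (0:ℝ)..t, Real.exp (-ν*y) * y ^ c) ≤ ∫ y in (0:ℝ)..t, y ^ c := by
    apply intervalIntegral.integral_mono_on ht.le (integrable_aux ν t c hc)
      (ContinuousOn.intervalIntegrable (continuousOn_id.rpow_const fun x _ => Or.inr hc))
    intro y hy
    have h2 : Real.exp (-ν*y) ≤ 1 := by
      rw [Real.exp_le_one_iff]
      have := hy.1
      nlinarith
    have h3 : (0:ℝ) ≤ y ^ c := Real.rpow_nonneg hy.1 c
    simp only [id_eq]
    nlinarith
  have h2 : ∫ y in (0:ℝ)..t, y ^ c = t^(c+1)/(c+1) := by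
    rw [integral_rpow (Or.inl (by linarith))]
    rw [Real.zero_rpow (by positivity)]
    ring
  linarith [h1, le_of_eq h2]

lemma partial_sum_aux (ν t s : ℝ) (hs : 0 ≤ s) (ht : 0 < t) : ∀ N : ℕ,
    ∫ y in (0:ℝ)..t, Real.exp (-ν*y) * y ^ s
      = Real.exp (-ν*t) * ∑ j ∈ Finset.range N, ν^j * t^(s+(j:ℝ)+1) / Pprod s (j+1)
        + ν^N / Pprod s N * ∫ y in (0:ℝ)..t, Real.exp (-ν*y) * y^(s+(N:ℝ)) := by
  intro N
  induction N with
  | zero => simp [Pprod]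
  | succ N ih =>
    have hP : (0:ℝ) < Pprod s N := Pprod_pos hs N
    have hsN : (0:ℝ) < s + N + 1 := by positivity
    have step := ibp_step ν t (s + (N:ℝ)) (by positivity) ht
    rw [ih, step]
    rw [Finset.sum_range_succ, Pprod_succ]
    rw [show s + ((N:ℕ)+1:ℕ) = s + (N:ℝ) + 1 by push_cast; ring]
    field_simp
    ring

lemma term_bound (ν t s : ℝ) (hν : 0 ≤ ν) (ht : 0 < t) (hs : 0 ≤ s) (n : ℕ) :
    ν^n * t^(s+(n:ℝ)+1) / Pprod s (n+1) ≤ t^(s+1) * ((ν*t)^n / n.factorial) := by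
  have hP : (0:ℝ) < Pprod s (n+1) := Pprod_pos hs (n+1)
  have hPf : ((n+1).factorial : ℝ) ≤ Pprod s (n+1) := Pprod_ge_fact hs (n+1)
  have hf : (0:ℝ) < (n.factorial : ℝ) := by positivity
  have hfle : (n.factorial : ℝ) ≤ ((n+1).factorial : ℝ) := by
    exact_mod_cast Nat.factorial_le (Nat.le_succ n)
  have hfP : (n.factorial : ℝ) ≤ Pprod s (n+1) := le_trans hfle hPf
  have ht1 : t^(s+(n:ℝ)+1) = t^(s+1) * t^(n:ℝ) := by
    rw [show s + (n:ℝ) + 1 = (s+1) + (n:ℝ) by ring, Real.rpow_add ht]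
  have ht2 : t^((n:ℝ)) = t^n := Real.rpow_natCast t n
  have hnum : (0:ℝ) ≤ ν^n * t^(s+(n:ℝ)+1) := by
    have := Real.rpow_nonneg ht.le (s+(n:ℝ)+1); positivity
  calc ν^n * t^(s+(n:ℝ)+1) / Pprod s (n+1) ≤ ν^n * t^(s+(n:ℝ)+1) / (n.factorial : ℝ) := by
        apply div_le_div_of_nonneg_left hnum hf hfP
    _ = t^(s+1) * ((ν*t)^n / n.factorial) := by
        rw [ht1, ht2, mul_pow]; ring

lemma remainder_tendsto (ν t s : ℝ) (hν : 0 ≤ ν) (ht : 0 < t) (hs : 0 ≤ s) :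
    Tendsto (fun N : ℕ => ν^N / Pprod s N * ∫ y in (0:ℝ)..t, Real.exp (-ν*y) * y^(s+(N:ℝ)))
      atTop (nhds 0) := by
  apply squeeze_zero (g := fun N : ℕ => t^(s+1) * ((ν*t)^N / N.factorial))
  · intro N
    have hP : (0:ℝ) < Pprod s N := Pprod_pos hs N
    have hI := integral_nonneg_aux ν t (s+(N:ℝ)) hν ht (by positivity)
    positivity
  · intro N
    have hP : (0:ℝ) < Pprod s N := Pprod_pos hs N
    have hsN : (0:ℝ) < s + N + 1 := by positivity
    have hI := integral_le_aux ν t (s+(N:ℝ)) hν ht (by positivity)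
    have hI0 := integral_nonneg_aux ν t (s+(N:ℝ)) hν ht (by positivity)
    have h1 : ν^N / Pprod s N * ∫ y in (0:ℝ)..t, Real.exp (-ν*y) * y^(s+(N:ℝ))
        ≤ ν^N / Pprod s N * (t^(s+(N:ℝ)+1)/(s+N+1)) := by
      apply mul_le_mul_of_nonneg_left hI (by positivity)
    have h2 : ν^N / Pprod s N * (t^(s+(N:ℝ)+1)/(s+N+1))
        = ν^N * t^(s+(N:ℝ)+1) / Pprod s (N+1) := by
      rw [Pprod_succ]; field_simp
    have h3 := term_bound ν t s hν ht hs N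
    linarith
  · have h4 : Tendsto (fun N : ℕ => (ν*t)^N / (N.factorial:ℝ)) atTop (nhds 0) :=
      (Real.summable_pow_div_factorial (ν*t)).tendsto_atTop_zero
    have := h4.const_mul (t^(s+1))
    simpa using this

lemma summable_terms (ν t s : ℝ) (hν : 0 ≤ ν) (ht : 0 < t) (hs : 0 ≤ s) :
    Summable (fun n : ℕ => ν^n * t^(s+(n:ℝ)+1) / Pprod s (n+1)) := by
  apply Summable.of_nonneg_of_le
  · intro n
    have hP : (0:ℝ) < Pprod s (n+1) := Pprod_pos hs (n+1)
    have := Real.rpow_nonneg ht.le (s+(n:ℝ)+1)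
    positivity
  · exact fun n => term_bound ν t s hν ht hs n
  · exact (Real.summable_pow_div_factorial (ν*t)).mul_left _

lemma key_integral (ν t s : ℝ) (hν : 0 ≤ ν) (ht : 0 < t) (hs : 0 ≤ s) :
    ∫ y in (0:ℝ)..t, Real.exp (-ν*y) * y ^ s
      = Real.exp (-ν*t) * ∑' n : ℕ, ν^n * t^(s+(n:ℝ)+1)
          * (Real.Gamma (s+1) / Real.Gamma (s+(n:ℝ)+2)) := by
  set I := ∫ y in (0:ℝ)..t, Real.exp (-ν*y) * y ^ s with hI
  set f : ℕ → ℝ := fun n => ν^n * t^(s+(n:ℝ)+1) / Pprod s (n+1) with hf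
  have hsum : Summable f := summable_terms ν t s hν ht hs
  have htend1 : Tendsto (fun N : ℕ => Real.exp (-ν*t) * ∑ j ∈ Finset.range N, f j)
      atTop (nhds I) := by
    have heq : ∀ N : ℕ, Real.exp (-ν*t) * ∑ j ∈ Finset.range N, f j
        = I - ν^N / Pprod s N * ∫ y in (0:ℝ)..t, Real.exp (-ν*y) * y^(s+(N:ℝ)) := by
      intro N
      have := partial_sum_aux ν t s hs ht N
      rw [hI, this]; ring
    rw [show I = I - 0 by ring]
    simp_rw [heq]
    exact tendsto_const_nhds.sub (remainder_tendsto ν t s hν ht hs)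
  have htend2 : Tendsto (fun N : ℕ => Real.exp (-ν*t) * ∑ j ∈ Finset.range N, f j)
      atTop (nhds (Real.exp (-ν*t) * ∑' n, f n)) :=
    (hsum.hasSum.tendsto_sum_nat).const_mul _
  have hIeq : I = Real.exp (-ν*t) * ∑' n, f n := tendsto_nhds_unique htend1 htend2
  rw [hIeq]
  congr 1
  apply tsum_congr
  intro n
  have hP : (0:ℝ) < Pprod s (n+1) := Pprod_pos hs (n+1)
  have hG1 : (0:ℝ) < Real.Gamma (s+1) := Real.Gamma_pos_of_pos (by linarith)
  have hG2 : Real.Gamma (s+1) * Pprod s (n+1) = Real.Gamma (s+(n:ℝ)+2) := by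
    have := Pprod_gamma hs (n+1)
    rw [this]; congr 1; push_cast; ring
  rw [hf]
  rw [show Real.Gamma (s+(n:ℝ)+2) = Real.Gamma (s+1) * Pprod s (n+1) from hG2.symm]
  field_simp

lemma rpow_split (y : ℝ) (hy : 0 ≤ y) (β : ℝ) (hβ : 0 < β) (m k : ℕ) :
    y ^ m * (y ^ β) ^ k = y ^ (β*(k:ℝ)+(m:ℝ)) := by
  rcases eq_or_lt_of_le hy with h | h
  · subst h
    rcases Nat.eq_zero_or_pos k with hk | hk
    · rcases Nat.eq_zero_or_pos m with hm | hm
      · subst hk; subst hm; norm_num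
      · subst hk
        have hm' : (0:ℝ) < (m:ℝ) := by exact_mod_cast hm
        simp only [pow_zero, mul_one, Nat.cast_zero, mul_zero, zero_add]
        rw [zero_pow (by omega), Real.zero_rpow (ne_of_gt hm')]
    · have h1 : ((0:ℝ) ^ β) ^ k = 0 := by
        rw [Real.zero_rpow (ne_of_gt hβ), zero_pow (by omega)]
      rw [h1, Real.zero_rpow]
      · ring
      · have : (0:ℝ) < β * k := by positivity
        have : (0:ℝ) ≤ (m:ℝ) := m.cast_nonneg
        positivity
  · have h1 : (y ^ β) ^ k = y ^ (β*(k:ℝ)) := by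
      rw [← Real.rpow_natCast (y ^ β) k, ← Real.rpow_mul h.le]
    have h2 : y ^ m = y ^ ((m:ℝ)) := (Real.rpow_natCast y m).symm
    rw [h1, h2, ← Real.rpow_add h]
    ring_nf

lemma step_k (β ν w : ℝ) (hβ0 : 0 < β) (hν : 0 ≤ ν) (m : ℕ) (t : ℝ) (ht : 0 < t) (k : ℕ) :
    (∫ y in (0:ℝ)..t, Real.exp (-ν*y) * y ^ m * ((w*y^β)^k / Real.Gamma (β*(k:ℝ)+((m:ℝ)+1))))
      = Real.exp (-ν*t) * ∑' n : ℕ,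
          ν^n * w^k * t^(β*(k:ℝ)+(m:ℝ)+(n:ℝ)+1) / Real.Gamma (β*(k:ℝ)+(m:ℝ)+(n:ℝ)+2) := by
  set s := β*(k:ℝ)+(m:ℝ) with hs
  have hs0 : 0 ≤ s := by positivity
  have hG : 0 < Real.Gamma (s+1) := Real.Gamma_pos_of_pos (by linarith)
  have hpt : ∀ y ∈ Set.uIcc (0:ℝ) t,
      Real.exp (-ν*y) * y ^ m * ((w*y^β)^k / Real.Gamma (β*(k:ℝ)+((m:ℝ)+1)))
        = (w^k / Real.Gamma (s+1)) * (Real.exp (-ν*y) * y ^ s) := by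
    intro y hy
    rw [Set.uIcc_of_le ht.le] at hy
    have hy0 : 0 ≤ y := hy.1
    have h2 : β*(k:ℝ)+((m:ℝ)+1) = s + 1 := by rw [hs]; ring
    have h1 : y ^ s = y ^ m * (y^β)^k := by rw [← rpow_split y hy0 β hβ0 m k]
    rw [h2, h1, mul_pow]
    ring
  rw [intervalIntegral.integral_congr hpt, intervalIntegral.integral_const_mul]
  rw [key_integral ν t s hν ht hs0]
  rw [mul_left_comm]
  congr 1
  rw [← tsum_mul_left]
  apply tsum_congr
  intro n
  have e1 : s + (n:ℝ) + 1 = β*(k:ℝ)+(m:ℝ)+(n:ℝ)+1 := by rw [hs]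
  have e2 : s + (n:ℝ) + 2 = β*(k:ℝ)+(m:ℝ)+(n:ℝ)+2 := by rw [hs]
  have hG2 : 0 < Real.Gamma (β*(k:ℝ)+(m:ℝ)+(n:ℝ)+2) := by
    apply Real.Gamma_pos_of_pos
    have : (0:ℝ) ≤ β*(k:ℝ) := by positivity
    have : (0:ℝ) ≤ (m:ℝ) := m.cast_nonneg
    have : (0:ℝ) ≤ (n:ℝ) := n.cast_nonneg
    linarith
  rw [e1, e2]
  field_simp

set_option maxHeartbeats 2000000 in
theorem integral_exp_pow_mittagLeffler
    (β ν w : ℝ) (hβ : β ∈ Set.Ioo (0 : ℝ) 1) (hν : 0 ≤ ν) (m : ℕ) (t : ℝ) (ht : 0 < t) :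
    ∫ y in (0 : ℝ)..t, Real.exp (-ν * y) * y ^ m * mittagLeffler β (m + 1) (w * y ^ β) =
      Real.exp (-ν * t) *
        ∑' n : ℕ, ν ^ n * t ^ (m + n + 1) * mittagLeffler β (m + n + 2) (w * t ^ β) := by
  obtain ⟨hβ0, hβ1⟩ := hβ
  have hm1 : (1:ℝ) ≤ (m:ℝ) + 1 := by have : (0:ℝ) ≤ (m:ℝ) := m.cast_nonneg; linarith
  have htβ : (0:ℝ) < t ^ β := Real.rpow_pos_of_pos ht β
  -- the summand functions
  set g : ℕ → ℝ → ℝ := fun k y =>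
    Real.exp (-ν*y) * y ^ m * ((w*y^β)^k / Real.Gamma (β*(k:ℝ)+((m:ℝ)+1))) with hg
  have hrpowβ : Continuous fun y : ℝ => y ^ β :=
    continuous_iff_continuousAt.mpr fun x => Real.continuousAt_rpow_const x β (Or.inr hβ0.le)
  have hcont : ∀ k, Continuous (g k) := by
    intro k
    apply Continuous.mul
    · exact (Real.continuous_exp.comp (continuous_const.mul continuous_id)).mul (continuous_pow m)
    · exact ((continuous_const.mul hrpowβ).pow k).div_const _
  -- Step A : interchange integral and sum
  have hGpos : ∀ b : ℝ, 1 ≤ b → ∀ k : ℕ, 0 < Real.Gamma (β*(k:ℝ)+b) := by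
    intro b hb k
    apply Real.Gamma_pos_of_pos
    have : (0:ℝ) ≤ β*(k:ℝ) := by positivity
    linarith
  set c : ℕ → ℝ := fun k => t ^ m * ((|w| * t ^ β)^k / Real.Gamma (β*(k:ℝ)+((m:ℝ)+1))) with hc
  have hcsum : Summable c :=
    (summable_aux β ((m:ℝ)+1) (|w| * t ^ β) hβ0 hm1 (by positivity)).mul_left _
  have hbound : ∀ k, ∀ y ∈ Set.Ioc (0:ℝ) t, ‖g k y‖ ≤ c k := by
    intro k y hy
    have hy0 : 0 < y := hy.1
    have hyt : y ≤ t := hy.2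
    have hGk := hGpos ((m:ℝ)+1) hm1 k
    have hyβ : (0:ℝ) ≤ y ^ β := (Real.rpow_pos_of_pos hy0 β).le
    have habs : ‖g k y‖ = Real.exp (-ν*y) * y ^ m * ((|w| * y ^ β)^k / Real.Gamma (β*(k:ℝ)+((m:ℝ)+1))) := by
      rw [hg]
      simp only [Real.norm_eq_abs, abs_mul, abs_div, abs_pow]
      rw [abs_of_pos (Real.exp_pos _), abs_of_pos hy0, abs_of_nonneg hyβ, abs_of_pos hGk]
    rw [habs, hc]
    have h1 : Real.exp (-ν*y) ≤ 1 := by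
      rw [Real.exp_le_one_iff]; nlinarith
    have h2 : y ^ m ≤ t ^ m := pow_le_pow_left₀ hy0.le hyt m
    have h3 : (|w| * y ^ β)^k ≤ (|w| * t ^ β)^k := by
      apply pow_le_pow_left₀ (by positivity)
      have := Real.rpow_le_rpow hy0.le hyt hβ0.le
      nlinarith [abs_nonneg w]
    have hpm : (0:ℝ) ≤ y ^ m := pow_nonneg hy0.le m
    have hdiv : (|w| * y ^ β)^k / Real.Gamma (β*(k:ℝ)+((m:ℝ)+1))
        ≤ (|w| * t ^ β)^k / Real.Gamma (β*(k:ℝ)+((m:ℝ)+1)) := by gcongr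
    have e1 : (0:ℝ) ≤ (|w| * y ^ β)^k / Real.Gamma (β*(k:ℝ)+((m:ℝ)+1)) := by positivity
    have t2 : y ^ m * ((|w| * y ^ β)^k / Real.Gamma (β*(k:ℝ)+((m:ℝ)+1)))
        ≤ t ^ m * ((|w| * t ^ β)^k / Real.Gamma (β*(k:ℝ)+((m:ℝ)+1))) :=
      mul_le_mul h2 hdiv e1 (pow_nonneg ht.le m)
    calc Real.exp (-ν*y) * y ^ m * ((|w| * y ^ β)^k / Real.Gamma (β*(k:ℝ)+((m:ℝ)+1)))
        = Real.exp (-ν*y) * (y ^ m * ((|w| * y ^ β)^k / Real.Gamma (β*(k:ℝ)+((m:ℝ)+1)))) := by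
          ring
      _ ≤ 1 * (y ^ m * ((|w| * y ^ β)^k / Real.Gamma (β*(k:ℝ)+((m:ℝ)+1)))) :=
          mul_le_mul_of_nonneg_right h1 (mul_nonneg hpm e1)
      _ = y ^ m * ((|w| * y ^ β)^k / Real.Gamma (β*(k:ℝ)+((m:ℝ)+1))) := one_mul _
      _ ≤ t ^ m * ((|w| * t ^ β)^k / Real.Gamma (β*(k:ℝ)+((m:ℝ)+1))) := t2
  have hstepA : (∫ y in (0:ℝ)..t, Real.exp (-ν * y) * y ^ m * mittagLeffler β (m + 1) (w * y ^ β))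
      = ∑' k : ℕ, ∫ y in (0:ℝ)..t, g k y := by
    have hpt : ∀ y : ℝ, Real.exp (-ν * y) * y ^ m * mittagLeffler β (m + 1) (w * y ^ β)
        = ∑' k : ℕ, g k y := by
      intro y
      rw [mittagLeffler, ← tsum_mul_left]
    rw [intervalIntegral.integral_of_le ht.le]
    simp_rw [hpt]
    rw [MeasureTheory.integral_tsum (fun k => (hcont k).aestronglyMeasurable)]
    · simp_rw [← intervalIntegral.integral_of_le ht.le]
    · -- finiteness
      have hper : ∀ k, (∫⁻ y in Set.Ioc (0:ℝ) t, ‖g k y‖₊)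
          ≤ ENNReal.ofReal (c k) * ENNReal.ofReal t := by
        intro k
        have hae : ∀ᵐ y ∂(volume.restrict (Set.Ioc (0:ℝ) t)),
            (‖g k y‖₊ : ℝ≥0∞) ≤ ENNReal.ofReal (c k) := by
          rw [MeasureTheory.ae_restrict_iff' measurableSet_Ioc]
          apply MeasureTheory.ae_of_all
          intro y hy
          rw [← enorm_eq_nnnorm, ← ofReal_norm]
          exact ENNReal.ofReal_le_ofReal (hbound k y hy)
        calc (∫⁻ y in Set.Ioc (0:ℝ) t, ‖g k y‖₊)
            ≤ ∫⁻ _ in Set.Ioc (0:ℝ) t, ENNReal.ofReal (c k) :=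
              MeasureTheory.lintegral_mono_ae hae
          _ = ENNReal.ofReal (c k) * ENNReal.ofReal t := by
              rw [MeasureTheory.setLIntegral_const, Real.volume_Ioc, sub_zero]
      apply ne_top_of_le_ne_top _ (ENNReal.tsum_le_tsum hper)
      rw [ENNReal.tsum_mul_right]
      apply ENNReal.mul_ne_top _ ENNReal.ofReal_ne_top
      rw [← ENNReal.ofReal_tsum_of_nonneg (fun k => by positivity) hcsum]
      exact ENNReal.ofReal_ne_top
  -- Step B : evaluate each integral
  set A : ℕ → ℕ → ℝ := fun k n =>
    ν^n * w^k * t^(β*(k:ℝ)+(m:ℝ)+(n:ℝ)+1) / Real.Gamma (β*(k:ℝ)+(m:ℝ)+(n:ℝ)+2) with hA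
  have hstepB : ∀ k, (∫ y in (0:ℝ)..t, g k y) = Real.exp (-ν*t) * ∑' n : ℕ, A k n :=
    fun k => step_k β ν w hβ0 hν m t ht k
  -- Fubini for the double sum
  have htexp : ∀ k n : ℕ, t^(β*(k:ℝ)+(m:ℝ)+(n:ℝ)+1) = (t^β)^k * (t^((m:ℝ)+1) * t^(n:ℕ)) := by
    intro k n
    have e : β*(k:ℝ)+(m:ℝ)+(n:ℝ)+1 = β*(k:ℝ) + (((m:ℝ)+1) + (n:ℝ)) := by ring
    rw [e, Real.rpow_add ht, Real.rpow_add ht, Real.rpow_natCast,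
      ← Real.rpow_natCast (t^β) k, ← Real.rpow_mul ht.le]
  have hsumA : Summable (Function.uncurry A) := by
    have hm2 : (1:ℝ) ≤ (m:ℝ) + 2 := by linarith
    have hFs : Summable (fun p : ℕ × ℕ =>
        (t^((m:ℝ)+1) * ((|w| * t ^ β)^p.1 / Real.Gamma (β*(p.1:ℝ)+((m:ℝ)+2))))
          * ((ν*t)^p.2/(p.2.factorial:ℝ))) :=
      Summable.mul_of_nonneg
        ((summable_aux β ((m:ℝ)+2) (|w| * t ^ β) hβ0 hm2 (by positivity)).mul_left _)
        (Real.summable_pow_div_factorial (ν*t))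
        (fun k => by have := hGpos ((m:ℝ)+2) hm2 k; positivity)
        (fun n => by positivity)
    apply Summable.of_abs
    refine Summable.of_nonneg_of_le (fun p => abs_nonneg _) ?_ hFs
    rintro ⟨k, n⟩
    have hGk2 := hGpos ((m:ℝ)+2) hm2 k
    have hfn : (0:ℝ) < (n.factorial : ℝ) := by positivity
    have hGkn : 0 < Real.Gamma (β*(k:ℝ)+(m:ℝ)+(n:ℝ)+2) := by
      apply Real.Gamma_pos_of_pos
      have h0 : (0:ℝ) ≤ β*(k:ℝ) := by positivity
      have h1 : (0:ℝ) ≤ (m:ℝ) := m.cast_nonneg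
      have h2 : (0:ℝ) ≤ (n:ℝ) := n.cast_nonneg
      linarith
    have htr : (0:ℝ) < t^(β*(k:ℝ)+(m:ℝ)+(n:ℝ)+1) := Real.rpow_pos_of_pos ht _
    have habs : |Function.uncurry A (k, n)|
        = ν^n * |w|^k * t^(β*(k:ℝ)+(m:ℝ)+(n:ℝ)+1) / Real.Gamma (β*(k:ℝ)+(m:ℝ)+(n:ℝ)+2) := by
      simp only [Function.uncurry, hA]
      rw [abs_div, abs_mul, abs_mul, abs_pow, abs_pow, abs_of_nonneg hν,
        abs_of_pos htr, abs_of_pos hGkn]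
    have hfact : (n.factorial:ℝ) * Real.Gamma (β*(k:ℝ)+((m:ℝ)+2))
        ≤ Real.Gamma (β*(k:ℝ)+(m:ℝ)+(n:ℝ)+2) := by
      have hx1 : (1:ℝ) ≤ β*(k:ℝ)+((m:ℝ)+2) := by
        have h0 : (0:ℝ) ≤ β*(k:ℝ) := by positivity
        have h1 : (0:ℝ) ≤ (m:ℝ) := m.cast_nonneg
        linarith
      have h := gamma_fact_le (β*(k:ℝ)+((m:ℝ)+2)) hx1 n
      rw [show β*(k:ℝ)+((m:ℝ)+2)+(n:ℝ) = β*(k:ℝ)+(m:ℝ)+(n:ℝ)+2 by ring] at h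
      exact h
    rw [habs]
    have hnum : (0:ℝ) ≤ ν^n * |w|^k * t^(β*(k:ℝ)+(m:ℝ)+(n:ℝ)+1) := by positivity
    calc ν^n * |w|^k * t^(β*(k:ℝ)+(m:ℝ)+(n:ℝ)+1) / Real.Gamma (β*(k:ℝ)+(m:ℝ)+(n:ℝ)+2)
        ≤ ν^n * |w|^k * t^(β*(k:ℝ)+(m:ℝ)+(n:ℝ)+1)
            / ((n.factorial:ℝ) * Real.Gamma (β*(k:ℝ)+((m:ℝ)+2))) := by
          apply div_le_div_of_nonneg_left hnum (by positivity) hfact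
      _ = (t^((m:ℝ)+1) * ((|w| * t ^ β)^k / Real.Gamma (β*(k:ℝ)+((m:ℝ)+2))))
            * ((ν*t)^n/(n.factorial:ℝ)) := by
          rw [htexp k n, mul_pow, mul_pow]
          field_simp
  -- assemble
  rw [hstepA]
  rw [tsum_congr hstepB, tsum_mul_left]
  congr 1
  rw [← Summable.tsum_comm hsumA]
  apply tsum_congr
  intro n
  rw [mittagLeffler, ← tsum_mul_left]
  apply tsum_congr
  intro k
  have hGkn : 0 < Real.Gamma (β*(k:ℝ)+(m:ℝ)+(n:ℝ)+2) := by
    apply Real.Gamma_pos_of_pos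
    have h0 : (0:ℝ) ≤ β*(k:ℝ) := by positivity
    have h1 : (0:ℝ) ≤ (m:ℝ) := m.cast_nonneg
    have h2 : (0:ℝ) ≤ (n:ℝ) := n.cast_nonneg
    linarith
  have eΓ : β*(k:ℝ)+((m:ℝ)+(n:ℝ)+2) = β*(k:ℝ)+(m:ℝ)+(n:ℝ)+2 := by ring
  have ht1 : t^((m:ℝ)+1) = t^(m+1 : ℕ) := by
    rw [← Real.rpow_natCast t (m+1)]
    congr 1
    push_cast
    ring
  have ht2 : (t^(m+1:ℕ)) * (t^(n:ℕ)) = t^(m+n+1:ℕ) := by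
    rw [← pow_add]
    congr 1
    omega
  simp only [hA]
  rw [eΓ, htexp k n, ht1, mul_pow]
  field_simp
  rw [← ht2]
  ring
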